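/- Chen's identity: let X : [a,b] → ℝ^d and Y : [b,c] → ℝ^d be continuously differentiable paths with X(b) = Y(b), and let X∗Y : [a,c] → ℝ^d be their concatenation. Then for every k ≥ 0, the level-k signature term of X∗Y equals ∑_{j=0}^{k} Sig_j(X) ⊗ Sig_{k−j}(Y), where Sig_j denotes the level-j signature term. -/

import Mathlib

open MeasureTheory

/-- Coordinates of the signature of the path `X` over `[t, b]`, indexed by words:
`sigWordFrom X b [i₁,…,i_k] t = ∫_{t < t₁ < ⋯ < t_k < b} X_{i₁}'(t₁) ⋯ X_{i_k}'(t_k) dt₁⋯dt_k`. -/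
noncomputable def sigWordFrom {d : ℕ} (X : ℝ → Fin d → ℝ) (b : ℝ) :
    List (Fin d) → ℝ → ℝ
  | [] => fun _ => 1
  | i :: w => fun t => ∫ s in t..b, deriv (fun u => X u i) s * sigWordFrom X b w s

lemma coord_contDiff {d : ℕ} {X : ℝ → Fin d → ℝ} (hX : ContDiff ℝ 1 X) (i : Fin d) :
    ContDiff ℝ 1 (fun u => X u i) :=
  ((ContinuousLinearMap.proj i : (Fin d → ℝ) →L[ℝ] ℝ).contDiff).comp hX

lemma sig_cont {d : ℕ} {X : ℝ → Fin d → ℝ} (hX : ContDiff ℝ 1 X) (b : ℝ) :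
    ∀ w : List (Fin d), Continuous (sigWordFrom X b w)
  | [] => continuous_const
  | i :: w => by
    have hw := sig_cont hX b w
    have hg : Continuous fun s => deriv (fun u => X u i) s * sigWordFrom X b w s :=
      ((coord_contDiff hX i).continuous_deriv le_rfl).mul hw
    have heq : sigWordFrom X b (i :: w)
        = fun t => (∫ s in (0:ℝ)..b, deriv (fun u => X u i) s * sigWordFrom X b w s)
            - ∫ s in (0:ℝ)..t, deriv (fun u => X u i) s * sigWordFrom X b w s := by
      funext t
      rw [show sigWordFrom X b (i :: w) t
          = ∫ s in t..b, deriv (fun u => X u i) s * sigWordFrom X b w s from rfl,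
        ← intervalIntegral.integral_interval_sub_left (hg.intervalIntegrable _ _)
          (hg.intervalIntegrable _ _)]
    rw [heq]
    exact continuous_const.sub
      (intervalIntegral.continuous_primitive (fun a b => hg.intervalIntegrable a b) 0)

/-- Chen's identity: if `Z` is the concatenation of the `C¹` paths
`X : [a,b] → ℝ^d` and `Y : [b,c] → ℝ^d` with `X b = Y b`, then for every word `w`, the
corresponding coordinate of the level-`|w|` signature term of `Z` over `[a,c]` equals
`∑_{j=0}^{|w|} Sig_{w.take j}(X) ⊗ Sig_{w.drop j}(Y)` — i.e. the coordinate of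
`∑_{j=0}^{k} Sig_j(X) ⊗ Sig_{k-j}(Y)`. -/
theorem chen_identity (d : ℕ) (a b c : ℝ) (hab : a ≤ b) (hbc : b ≤ c)
    (X Y : ℝ → Fin d → ℝ) (hX : ContDiff ℝ 1 X) (hY : ContDiff ℝ 1 Y)
    (hmatch : X b = Y b)
    (Z : ℝ → Fin d → ℝ) (hZ : ∀ t, Z t = if t ≤ b then X t else Y t)
    (w : List (Fin d)) :
    sigWordFrom Z c w a
      = ∑ j ∈ Finset.range (w.length + 1),
          sigWordFrom X b (w.take j) a * sigWordFrom Y c (w.drop j) b := by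
  have hZX : ∀ (i : Fin d) (s : ℝ), s < b →
      deriv (fun u => Z u i) s = deriv (fun u => X u i) s := by
    intro i s hs
    apply Filter.EventuallyEq.deriv_eq
    filter_upwards [Iio_mem_nhds hs] with u hu
    rw [hZ u, if_pos (le_of_lt hu)]
  have hZY : ∀ (i : Fin d) (s : ℝ), b < s →
      deriv (fun u => Z u i) s = deriv (fun u => Y u i) s := by
    intro i s hs
    apply Filter.EventuallyEq.deriv_eq
    filter_upwards [Ioi_mem_nhds hs] with u hu
    rw [hZ u, if_neg (not_le.mpr hu)]
  have hsigZY : ∀ (w : List (Fin d)) (t : ℝ), b ≤ t →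
      sigWordFrom Z c w t = sigWordFrom Y c w t := by
    intro w
    induction w with
    | nil => intro t _; rfl
    | cons i w ih =>
      intro t ht
      show (∫ s in t..c, deriv (fun u => Z u i) s * sigWordFrom Z c w s)
        = ∫ s in t..c, deriv (fun u => Y u i) s * sigWordFrom Y c w s
      apply intervalIntegral.integral_congr_ae
      apply Filter.Eventually.of_forall
      intro x hx
      have hbx : b < x := by
        rcases Set.mem_uIoc.mp hx with ⟨h1, _⟩ | ⟨h1, _⟩
        · exact lt_of_le_of_lt ht h1
        · exact lt_of_le_of_lt hbc h1
      rw [hZY i x hbx, ih x hbx.le]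
  suffices key : ∀ (w : List (Fin d)) (t : ℝ), t ≤ b →
      sigWordFrom Z c w t = ∑ j ∈ Finset.range (w.length + 1),
        sigWordFrom X b (w.take j) t * sigWordFrom Y c (w.drop j) b by
    exact key w a hab
  intro w
  induction w with
  | nil => intro t _; simp [sigWordFrom]
  | cons i w ih =>
    intro t ht
    have hg1c : Continuous (fun s => deriv (fun u => X u i) s *
        ∑ j ∈ Finset.range (w.length + 1),
          sigWordFrom X b (w.take j) s * sigWordFrom Y c (w.drop j) b) :=
      ((coord_contDiff hX i).continuous_deriv le_rfl).mul
        (continuous_finset_sum _ fun j _ => (sig_cont hX b _).mul continuous_const)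
    have hg2c : Continuous (fun s => deriv (fun u => Y u i) s * sigWordFrom Y c w s) :=
      ((coord_contDiff hY i).continuous_deriv le_rfl).mul (sig_cont hY c w)
    have hfg1 : ∀ x ∈ Set.Ioo t b,
        deriv (fun u => Z u i) x * sigWordFrom Z c w x
          = deriv (fun u => X u i) x *
              ∑ j ∈ Finset.range (w.length + 1),
                sigWordFrom X b (w.take j) x * sigWordFrom Y c (w.drop j) b := by
      intro x hx
      rw [hZX i x hx.2, ih x hx.2.le]
    have hfg2 : ∀ x ∈ Set.Ioc b c,
        deriv (fun u => Z u i) x * sigWordFrom Z c w x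
          = deriv (fun u => Y u i) x * sigWordFrom Y c w x := by
      intro x hx
      rw [hZY i x hx.1, hsigZY w x hx.1.le]
    have hfib : IntervalIntegrable
        (fun s => deriv (fun u => Z u i) s * sigWordFrom Z c w s) volume t b := by
      apply (hg1c.intervalIntegrable t b).congr_ae
      rw [Set.uIoc_of_le ht, ← MeasureTheory.restrict_Ioo_eq_restrict_Ioc]
      filter_upwards [ae_restrict_mem measurableSet_Ioo] with x hx
      exact (hfg1 x hx).symm
    have hfbc : IntervalIntegrable
        (fun s => deriv (fun u => Z u i) s * sigWordFrom Z c w s) volume b c := by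
      apply (hg2c.intervalIntegrable b c).congr_ae
      rw [Set.uIoc_of_le hbc]
      filter_upwards [ae_restrict_mem measurableSet_Ioc] with x hx
      exact (hfg2 x hx).symm
    have hsplit : sigWordFrom Z c (i :: w) t
        = (∫ s in t..b, deriv (fun u => Z u i) s * sigWordFrom Z c w s)
          + ∫ s in b..c, deriv (fun u => Z u i) s * sigWordFrom Z c w s :=
      (intervalIntegral.integral_add_adjacent_intervals hfib hfbc).symm
    have h1 : (∫ s in t..b, deriv (fun u => Z u i) s * sigWordFrom Z c w s)
        = ∫ s in t..b, deriv (fun u => X u i) s *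
            ∑ j ∈ Finset.range (w.length + 1),
              sigWordFrom X b (w.take j) s * sigWordFrom Y c (w.drop j) b := by
      apply intervalIntegral.integral_congr_ae
      rw [Set.uIoc_of_le ht]
      have hne : ∀ᵐ x : ℝ, x ≠ b := by
        rw [MeasureTheory.ae_iff]
        simp
      filter_upwards [hne] with x hxb hx
      exact hfg1 x ⟨hx.1, lt_of_le_of_ne hx.2 hxb⟩
    have h2 : (∫ s in b..c, deriv (fun u => Z u i) s * sigWordFrom Z c w s)
        = ∫ s in b..c, deriv (fun u => Y u i) s * sigWordFrom Y c w s := by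
      apply intervalIntegral.integral_congr_ae
      rw [Set.uIoc_of_le hbc]
      exact Filter.Eventually.of_forall fun x hx => hfg2 x hx
    have h1' : (∫ s in t..b, deriv (fun u => X u i) s *
            ∑ j ∈ Finset.range (w.length + 1),
              sigWordFrom X b (w.take j) s * sigWordFrom Y c (w.drop j) b)
        = ∑ j ∈ Finset.range (w.length + 1),
            sigWordFrom X b (i :: w.take j) t * sigWordFrom Y c (w.drop j) b := by
      have step1 : (∫ s in t..b, deriv (fun u => X u i) s *
            ∑ j ∈ Finset.range (w.length + 1),
              sigWordFrom X b (w.take j) s * sigWordFrom Y c (w.drop j) b)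
          = ∫ s in t..b, ∑ j ∈ Finset.range (w.length + 1),
              (deriv (fun u => X u i) s * sigWordFrom X b (w.take j) s)
                * sigWordFrom Y c (w.drop j) b := by
        apply intervalIntegral.integral_congr
        intro s _
        simp only [Finset.mul_sum, mul_assoc]
      rw [step1, intervalIntegral.integral_finset_sum (f := fun j s => deriv (fun u => X u i) s *
            sigWordFrom X b (w.take j) s * sigWordFrom Y c (w.drop j) b) (fun j _ =>
        ((((coord_contDiff hX i).continuous_deriv le_rfl).mul (sig_cont hX b _)).mul
          continuous_const).intervalIntegrable t b)]
      refine Finset.sum_congr rfl fun j _ => ?_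
      rw [intervalIntegral.integral_mul_const]
      rfl
    have h2' : (∫ s in b..c, deriv (fun u => Y u i) s * sigWordFrom Y c w s)
        = sigWordFrom Y c (i :: w) b := rfl
    rw [hsplit, h1, h2, h1', h2']
    rw [show (i :: w).length + 1 = w.length + 1 + 1 from rfl,
      Finset.sum_range_succ' (fun j =>
        sigWordFrom X b ((i :: w).take j) t * sigWordFrom Y c ((i :: w).drop j) b)
        (w.length + 1)]
    simp [sigWordFrom]
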